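/- If the list (3+t, 3−t, −1.9, −2, −2.1) with t > 0 is the spectrum of a 5×5 real symmetric entrywise nonnegative matrix, then t ≥ 0.9. -/

import Mathlib

open Polynomial Matrix Finset

lemma sra_eval_charpoly (M : Matrix (Fin 5) (Fin 5) ℝ) (μ : ℝ) :
    M.charpoly.eval μ = (Matrix.diagonal (fun _ : Fin 5 => μ) - M).det := by
  rw [Matrix.charpoly, _root_.eval_det, matPolyEquiv_charmatrix, Polynomial.eval_sub,
    Polynomial.eval_X, Polynomial.eval_C, Matrix.scalar_apply]

lemma sra_root_iff (M : Matrix (Fin 5) (Fin 5) ℝ) (μ : ℝ) :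
    M.charpoly.eval μ = 0 ↔ ∃ v, v ≠ 0 ∧ M *ᵥ v = μ • v := by
  rw [sra_eval_charpoly, ← Matrix.exists_mulVec_eq_zero_iff]
  constructor
  · rintro ⟨v, hv, h⟩
    refine ⟨v, hv, ?_⟩
    rw [Matrix.sub_mulVec] at h
    have h2 : Matrix.diagonal (fun _ : Fin 5 => μ) *ᵥ v = μ • v := by
      funext i; rw [Matrix.mulVec_diagonal]; rfl
    rw [h2] at h
    exact (sub_eq_zero.mp h).symm
  · rintro ⟨v, hv, h⟩
    refine ⟨v, hv, ?_⟩
    rw [Matrix.sub_mulVec, h]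
    have h2 : Matrix.diagonal (fun _ : Fin 5 => μ) *ᵥ v = μ • v := by
      funext i; rw [Matrix.mulVec_diagonal]; rfl
    rw [h2, sub_self]

lemma sra_key1 (A : Matrix (Fin 5) (Fin 5) ℝ) (hnn : ∀ i j, 0 ≤ A i j)
    (hdiag : ∀ i, A i i = 0) (hent : ∀ i j, A i j ≤ 21/10)
    (x : Fin 5 → ℝ) (hx : ∀ i, 0 ≤ x i) (hx0 : x ≠ 0)
    (hcard : (Finset.univ.filter fun i => x i ≠ 0).card ≤ 2) (μ : ℝ)
    (hμ : ∀ i, μ * x i ≤ (A *ᵥ x) i) : μ ≤ 21/10 := by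
  set s := Finset.univ.filter fun i => x i ≠ 0 with hs
  have hxs : ∀ i ∈ Finset.univ, i ∉ s → x i = 0 := by
    intro i _ hi
    by_contra hne
    exact hi (by simp [hs, hne])
  have hsq : ∀ i ∈ Finset.univ, i ∉ s → x i ^ 2 = 0 := by
    intro i h1 h2; rw [hxs i h1 h2]; ring
  have hsum_eq : ∑ i, x i = ∑ i ∈ s, x i :=
    (Finset.sum_subset (Finset.filter_subset _ _) hxs).symm
  have hsumsq_eq : ∑ i, x i ^ 2 = ∑ i ∈ s, x i ^ 2 :=
    (Finset.sum_subset (Finset.filter_subset _ _) hsq).symm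
  have hsum2 : (∑ i, x i) ^ 2 ≤ 2 * ∑ i, x i ^ 2 := by
    rw [hsum_eq, hsumsq_eq]
    calc (∑ i ∈ s, x i) ^ 2 ≤ s.card * ∑ i ∈ s, x i ^ 2 := sq_sum_le_card_mul_sum_sq
      _ ≤ 2 * ∑ i ∈ s, x i ^ 2 := by
          apply mul_le_mul_of_nonneg_right _ (Finset.sum_nonneg fun i _ => sq_nonneg _)
          exact_mod_cast hcard
  have hS2pos : 0 < ∑ i, x i ^ 2 := by
    obtain ⟨i, hi⟩ : ∃ i, x i ≠ 0 := by
      by_contra hc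
      push_neg at hc
      exact hx0 (funext hc)
    have h1 : 0 < x i ^ 2 := by positivity
    have h2 : ∀ j ∈ Finset.univ, 0 ≤ x j ^ 2 := fun j _ => sq_nonneg _
    calc 0 < x i ^ 2 := h1
      _ ≤ ∑ j, x j ^ 2 := Finset.single_le_sum h2 (Finset.mem_univ i)
  have main : μ * ∑ i, x i ^ 2 ≤ (21/10) * ∑ i, x i ^ 2 := by
    have step1 : μ * ∑ i, x i ^ 2 ≤ ∑ i, (A *ᵥ x) i * x i := by
      rw [Finset.mul_sum]
      apply Finset.sum_le_sum
      intro i _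
      have := mul_le_mul_of_nonneg_right (hμ i) (hx i)
      calc μ * x i ^ 2 = μ * x i * x i := by ring
        _ ≤ (A *ᵥ x) i * x i := this
    have step2 : ∑ i, (A *ᵥ x) i * x i = ∑ i, ∑ j, A i j * x j * x i := by
      apply Finset.sum_congr rfl
      intro i _
      rw [Matrix.mulVec, dotProduct, Finset.sum_mul]
    have step3 : ∑ i, ∑ j, A i j * x j * x i ≤
        ∑ i, ((21/10) * x i * (∑ j, x j) - (21/10) * x i ^ 2) := by
      apply Finset.sum_le_sum
      intro i _
      have expand : ∑ j, ((if i = j then (0:ℝ) else 21/10) * x j * x i) =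
          (21/10) * x i * (∑ j, x j) - (21/10) * x i ^ 2 := by
        have : ∀ j ∈ Finset.univ, ((if i = j then (0:ℝ) else 21/10) * x j * x i) =
            (21/10) * x j * x i - (if i = j then (21/10) * x j * x i else 0) := by
          intro j _
          by_cases h : i = j <;> simp [h]
        rw [Finset.sum_congr rfl this, Finset.sum_sub_distrib, Finset.sum_ite_eq]
        simp only [Finset.mem_univ, if_true]
        have e1 : ∑ j, (21/10 : ℝ) * x j * x i = (∑ j, x j) * ((21/10) * x i) := by
          rw [Finset.sum_mul]
          exact Finset.sum_congr rfl fun j _ => by ring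
        rw [e1]
        ring
      rw [← expand]
      apply Finset.sum_le_sum
      intro j _
      by_cases h : i = j
      · subst h; simp [hdiag i]
      · simp only [if_neg h]
        exact mul_le_mul_of_nonneg_right
          (mul_le_mul_of_nonneg_right (hent i j) (hx j)) (hx i)
    have step4 : ∑ i, ((21/10) * x i * (∑ j, x j) - (21/10) * x i ^ 2) =
        (21/10) * ((∑ i, x i) ^ 2 - ∑ i, x i ^ 2) := by
      rw [Finset.sum_sub_distrib]
      have e1 : ∑ i, ((21/10 : ℝ) * x i * (∑ j, x j)) =
          (∑ i, x i) * ((21/10) * (∑ j, x j)) := by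
        rw [Finset.sum_mul]
        exact Finset.sum_congr rfl fun i _ => by ring
      have e2 : ∑ i, ((21/10 : ℝ) * x i ^ 2) = (21/10) * ∑ i, x i ^ 2 :=
        (Finset.mul_sum _ _ _).symm
      rw [e1, e2]
      ring
    calc μ * ∑ i, x i ^ 2 ≤ ∑ i, (A *ᵥ x) i * x i := step1
      _ = ∑ i, ∑ j, A i j * x j * x i := step2
      _ ≤ ∑ i, ((21/10) * x i * (∑ j, x j) - (21/10) * x i ^ 2) := step3
      _ = (21/10) * ((∑ i, x i) ^ 2 - ∑ i, x i ^ 2) := step4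
      _ ≤ (21/10) * (2 * (∑ i, x i ^ 2) - ∑ i, x i ^ 2) := by nlinarith [hsum2]
      _ = (21/10) * ∑ i, x i ^ 2 := by ring
  exact le_of_mul_le_mul_right (by linarith [main]) hS2pos

lemma sra_key2a (A : Matrix (Fin 5) (Fin 5) ℝ) (hnn : ∀ i j, 0 ≤ A i j)
    (hdiag : ∀ i, A i i = 0) (hent : ∀ i j, A i j ≤ 21/10)
    (v : Fin 5 → ℝ) (μ : ℝ) (hev : A *ᵥ v = μ • v) (hpos : ∃ i, 0 < v i)
    (hcard : (Finset.univ.filter fun i => 0 < v i).card ≤ 2) : μ ≤ 21/10 := by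
  set x : Fin 5 → ℝ := fun i => max (v i) 0 with hxdef
  have hx : ∀ i, 0 ≤ x i := fun i => le_max_right _ _
  have hvx : ∀ i, v i ≤ x i := fun i => le_max_left _ _
  have hfe : (Finset.univ.filter fun i => x i ≠ 0) = Finset.univ.filter fun i => 0 < v i := by
    ext i
    simp only [Finset.mem_filter, Finset.mem_univ, true_and, hxdef]
    constructor
    · intro h
      rcases lt_or_ge 0 (v i) with h1 | h1
      · exact h1
      · exact absurd (max_eq_right h1) h
    · intro h
      rw [max_eq_left h.le]
      exact h.ne'
  obtain ⟨i0, hi0⟩ := hpos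
  have hx0 : x ≠ 0 := by
    intro hc
    have : x i0 = 0 := congrFun hc i0
    rw [hxdef] at this
    simp only [max_eq_left hi0.le] at this
    exact hi0.ne' this
  have hμx : ∀ i, μ * x i ≤ (A *ᵥ x) i := by
    intro i
    by_cases h : 0 < v i
    · have hxi : x i = v i := max_eq_left h.le
      have h1 : μ * v i = (A *ᵥ v) i := by rw [hev]; rfl
      have h2 : (A *ᵥ v) i ≤ (A *ᵥ x) i := by
        simp only [Matrix.mulVec, dotProduct]
        apply Finset.sum_le_sum
        intro j _
        exact mul_le_mul_of_nonneg_left (hvx j) (hnn i j)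
      rw [hxi, h1]
      exact h2
    · have hxi : x i = 0 := max_eq_right (not_lt.mp h)
      rw [hxi, mul_zero]
      show (0:ℝ) ≤ ∑ j, A i j * x j
      exact Finset.sum_nonneg fun j _ => mul_nonneg (hnn i j) (hx j)
  exact sra_key1 A hnn hdiag hent x hx hx0 (hfe ▸ hcard) μ hμx

lemma sra_signdef (A : Matrix (Fin 5) (Fin 5) ℝ) (hnn : ∀ i j, 0 ≤ A i j)
    (hdiag : ∀ i, A i i = 0) (hent : ∀ i j, A i j ≤ 21/10)
    (μ : ℝ) (hμ : 21/10 < μ) (v : Fin 5 → ℝ) (hv0 : v ≠ 0) (hv : A *ᵥ v = μ • v) :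
    ∃ w : Fin 5 → ℝ, (∀ i, 0 ≤ w i) ∧ w ≠ 0 ∧ A *ᵥ w = μ • w := by
  by_cases hpos : ∃ i, 0 < v i
  · by_cases hneg : ∃ i, v i < 0
    · exfalso
      set S := Finset.univ.filter fun i => 0 < v i with hS
      set T := Finset.univ.filter fun i => v i < 0 with hT
      have hdisj : Disjoint S T := by
        rw [Finset.disjoint_left]
        intro i hiS hiT
        simp only [hS, hT, Finset.mem_filter, Finset.mem_univ, true_and] at hiS hiT
        linarith
      have hcards : S.card + T.card ≤ 5 := by
        rw [← Finset.card_union_of_disjoint hdisj]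
        calc (S ∪ T).card ≤ (Finset.univ : Finset (Fin 5)).card := Finset.card_le_univ _
          _ = 5 := by simp
      rcases le_or_gt S.card 2 with hS2 | hS2
      · exact absurd (sra_key2a A hnn hdiag hent v μ hv hpos hS2) (not_le.mpr hμ)
      · have hT2 : T.card ≤ 2 := by omega
        have hnev : A *ᵥ (-v) = μ • (-v) := by rw [Matrix.mulVec_neg, hv, smul_neg]
        have hposn : ∃ i, 0 < (-v) i := by
          obtain ⟨i, hi⟩ := hneg
          exact ⟨i, by simpa using hi⟩
        have hcn : (Finset.univ.filter fun i => 0 < (-v) i).card ≤ 2 := by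
          have : (Finset.univ.filter fun i => 0 < (-v) i) = T := by
            ext i
            simp [hT, neg_pos]
          rwa [this]
        exact absurd (sra_key2a A hnn hdiag hent (-v) μ hnev hposn hcn) (not_le.mpr hμ)
    · push_neg at hneg
      exact ⟨v, hneg, hv0, hv⟩
  · push_neg at hpos
    refine ⟨-v, fun i => by simpa using hpos i, ?_, by rw [Matrix.mulVec_neg, hv, smul_neg]⟩
    intro hc
    exact hv0 (by simpa [neg_eq_zero] using hc)

theorem symmetric_realizable_perturbed_implies_t_ge (t : ℝ) (ht : 0 < t)
    (h : ∃ A : Matrix (Fin 5) (Fin 5) ℝ,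
        A.IsSymm ∧ (∀ i j, 0 ≤ A i j) ∧
        A.charpoly = (X - C (3 + t)) * (X - C (3 - t)) *
          (X + C (19 / 10)) * (X + C 2) * (X + C (21 / 10))) :
    9 / 10 ≤ t := by
  by_contra hlt
  push_neg at hlt
  obtain ⟨A, hsym, hnn, hcp⟩ := h
  have hroot : ∀ μ : ℝ, A.charpoly.eval μ = 0 →
      μ = 3 + t ∨ μ = 3 - t ∨ μ = -(19/10) ∨ μ = -2 ∨ μ = -(21/10) := by
    intro μ hμ
    rw [hcp] at hμ
    simp only [Polynomial.eval_mul, Polynomial.eval_sub, Polynomial.eval_add,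
      Polynomial.eval_X, Polynomial.eval_C, mul_eq_zero] at hμ
    rcases hμ with ((((h1|h1)|h1)|h1)|h1)
    · left; linarith
    · right; left; linarith
    · right; right; left; linarith
    · right; right; right; left; linarith
    · right; right; right; right; linarith
  have hherm : A.IsHermitian := by
    show Aᴴ = A
    ext i j
    rw [Matrix.conjTranspose_apply, star_trivial]
    exact congrFun (congrFun hsym i) j
  set B := A + (21/10 : ℝ) • (1 : Matrix (Fin 5) (Fin 5) ℝ) with hBdef
  have hB : B.IsHermitian := by
    apply hherm.add
    show ((21/10 : ℝ) • (1 : Matrix (Fin 5) (Fin 5) ℝ))ᴴ = _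
    rw [Matrix.conjTranspose_smul, Matrix.conjTranspose_one, star_trivial]
  have hBeig : ∀ i, 0 ≤ hB.eigenvalues i := by
    intro i
    have hu := hB.mulVec_eigenvectorBasis i
    have hu0 : ⇑(hB.eigenvectorBasis i) ≠ 0 := by
      have h1 := hB.eigenvectorBasis.toBasis.ne_zero i
      rw [OrthonormalBasis.coe_toBasis] at h1
      intro hc
      apply h1
      ext k
      exact congrFun hc k
    have hBu : B *ᵥ ⇑(hB.eigenvectorBasis i) =
        A *ᵥ ⇑(hB.eigenvectorBasis i) + (21/10 : ℝ) • ⇑(hB.eigenvectorBasis i) := by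
      show (A + (21/10 : ℝ) • (1 : Matrix (Fin 5) (Fin 5) ℝ)) *ᵥ _ = _
      rw [Matrix.add_mulVec, Matrix.smul_mulVec, Matrix.one_mulVec]
    rw [hBu] at hu
    have hAu : A *ᵥ ⇑(hB.eigenvectorBasis i) =
        (hB.eigenvalues i - 21/10) • ⇑(hB.eigenvectorBasis i) := by
      rw [sub_smul, ← hu]; abel
    have hr := (sra_root_iff A (hB.eigenvalues i - 21/10)).mpr ⟨_, hu0, hAu⟩
    rcases hroot _ hr with h1 | h1 | h1 | h1 | h1 <;> linarith
  have hpsd : B.PosSemidef := hB.posSemidef_iff_eigenvalues_nonneg.mpr (fun i => hBeig i)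
  have hq : ∀ x : Fin 5 → ℝ, 0 ≤ x ⬝ᵥ (A *ᵥ x) + (21/10) * (x ⬝ᵥ x) := by
    intro x
    have h1 := hpsd.dotProduct_mulVec_nonneg x
    rw [star_trivial, hBdef, Matrix.add_mulVec, Matrix.smul_mulVec,
      Matrix.one_mulVec, dotProduct_add, dotProduct_smul] at h1
    simpa using h1
  have hcp' : A.charpoly = (X - C (3+t)) * (X - C (3-t)) * (X - C (-(19/10 : ℝ))) *
      (X - C (-(2:ℝ))) * (X - C (-(21/10 : ℝ))) := by
    rw [hcp]; simp only [map_neg, sub_neg_eq_add]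
  have hne : ∀ r : ℝ, (X - C r) ≠ 0 := fun r => Polynomial.X_sub_C_ne_zero r
  have hsplits : A.charpoly.Splits := by
    rw [hcp']
    repeat' apply Polynomial.Splits.mul
    all_goals exact Polynomial.Splits.X_sub_C _
  have hrootsum : A.charpoly.roots.sum = 0 := by
    rw [hcp',
      Polynomial.roots_mul (mul_ne_zero (mul_ne_zero (mul_ne_zero (mul_ne_zero (hne _) (hne _)) (hne _)) (hne _)) (hne _)),
      Polynomial.roots_mul (mul_ne_zero (mul_ne_zero (mul_ne_zero (hne _) (hne _)) (hne _)) (hne _)),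
      Polynomial.roots_mul (mul_ne_zero (mul_ne_zero (hne _) (hne _)) (hne _)),
      Polynomial.roots_mul (mul_ne_zero (hne _) (hne _))]
    simp only [Polynomial.roots_X_sub_C, Multiset.sum_add, Multiset.sum_singleton]
    ring
  have htrace : A.trace = 0 := by
    rw [Matrix.trace_eq_sum_roots_charpoly_of_splits hsplits, hrootsum]
  have hsumdiag : ∑ i, A i i = 0 := by
    simpa [Matrix.trace, Matrix.diag] using htrace
  have hdiag : ∀ i, A i i = 0 := fun i =>
    (Finset.sum_eq_zero_iff_of_nonneg (fun j _ => hnn j j)).mp hsumdiag i (Finset.mem_univ i)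
  have hent : ∀ i j, A i j ≤ 21/10 := by
    intro i j
    by_cases hij : i = j
    · subst hij; rw [hdiag]; norm_num
    · have h1 := hq (Pi.single i (1:ℝ) - Pi.single j (1:ℝ))
      have e1 : A *ᵥ (Pi.single i (1:ℝ) - Pi.single j (1:ℝ)) =
          (fun k => A k i) - fun k => A k j := by
        rw [Matrix.mulVec_sub, Matrix.mulVec_single, Matrix.mulVec_single]
        simp
        rfl
      have e2 : (Pi.single i (1:ℝ) - Pi.single j (1:ℝ)) ⬝ᵥ (Pi.single i (1:ℝ) - Pi.single j (1:ℝ))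
          = (2:ℝ) := by
        rw [sub_dotProduct, dotProduct_sub, dotProduct_sub,
          dotProduct_single, dotProduct_single,
          dotProduct_single, dotProduct_single]
        simp [Pi.single_eq_same, Pi.single_eq_of_ne hij, Pi.single_eq_of_ne (Ne.symm hij)]
        norm_num
      rw [e1, e2, dotProduct_sub, sub_dotProduct, sub_dotProduct,
        single_dotProduct, single_dotProduct,
        single_dotProduct, single_dotProduct] at h1
      simp only [one_mul] at h1
      have hsymm : A i j = A j i := congrFun (congrFun hsym j) i
      rw [hdiag i, hdiag j] at h1
      linarith [h1]
  have hev1 : A.charpoly.eval (3 - t) = 0 := by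
    rw [hcp]
    simp only [Polynomial.eval_mul, Polynomial.eval_sub, Polynomial.eval_add,
      Polynomial.eval_X, Polynomial.eval_C]
    ring
  have hev2 : A.charpoly.eval (3 + t) = 0 := by
    rw [hcp]
    simp only [Polynomial.eval_mul, Polynomial.eval_sub, Polynomial.eval_add,
      Polynomial.eval_X, Polynomial.eval_C]
    ring
  obtain ⟨v, hv0, hv⟩ := (sra_root_iff A (3 - t)).mp hev1
  obtain ⟨w, hw0, hw⟩ := (sra_root_iff A (3 + t)).mp hev2
  have hgt1 : (21/10:ℝ) < 3 - t := by linarith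
  have hgt2 : (21/10:ℝ) < 3 + t := by linarith
  obtain ⟨v', hv'nn, hv'0, hv'⟩ := sra_signdef A hnn hdiag hent _ hgt1 v hv0 hv
  obtain ⟨w', hw'nn, hw'0, hw'⟩ := sra_signdef A hnn hdiag hent _ hgt2 w hw0 hw
  have hsymT : Aᵀ = A := hsym
  have horth : v' ⬝ᵥ w' = 0 := by
    have h1 : (A *ᵥ v') ⬝ᵥ w' = v' ⬝ᵥ (A *ᵥ w') := by
      rw [Matrix.dotProduct_mulVec, ← Matrix.mulVec_transpose, hsymT]
    have hl : (A *ᵥ v') ⬝ᵥ w' = (3 - t) * (v' ⬝ᵥ w') := by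
      rw [hv', smul_dotProduct, smul_eq_mul]
    have hr : v' ⬝ᵥ (A *ᵥ w') = (3 + t) * (v' ⬝ᵥ w') := by
      rw [hw', dotProduct_smul, smul_eq_mul]
    have h2 : 2 * t * (v' ⬝ᵥ w') = 0 := by
      rw [hl, hr] at h1; linarith
    rcases mul_eq_zero.mp h2 with h3 | h3
    · linarith
    · exact h3
  have hpw : ∀ i, v' i * w' i = 0 := by
    have hsum : ∑ i, v' i * w' i = 0 := horth
    exact fun i => (Finset.sum_eq_zero_iff_of_nonneg
      (fun j _ => mul_nonneg (hv'nn j) (hw'nn j))).mp hsum i (Finset.mem_univ i)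
  set S := Finset.univ.filter fun i => 0 < v' i with hSdef
  set T := Finset.univ.filter fun i => 0 < w' i with hTdef
  have hdisj : Disjoint S T := by
    rw [Finset.disjoint_left]
    intro i hiS hiT
    simp only [hSdef, hTdef, Finset.mem_filter, Finset.mem_univ, true_and] at hiS hiT
    exact absurd (hpw i) (mul_pos hiS hiT).ne'
  have hcards : S.card + T.card ≤ 5 := by
    rw [← Finset.card_union_of_disjoint hdisj]
    calc (S ∪ T).card ≤ (Finset.univ : Finset (Fin 5)).card := Finset.card_le_univ _
      _ = 5 := by simp
  have hposv : ∃ i, 0 < v' i := by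
    by_contra hc
    push_neg at hc
    exact hv'0 (funext fun i => le_antisymm (hc i) (hv'nn i))
  have hposw : ∃ i, 0 < w' i := by
    by_contra hc
    push_neg at hc
    exact hw'0 (funext fun i => le_antisymm (hc i) (hw'nn i))
  rcases le_or_gt S.card 2 with hS2 | hS2
  · have := sra_key2a A hnn hdiag hent v' (3 - t) hv' hposv hS2
    linarith
  · have hT2 : T.card ≤ 2 := by omega
    have := sra_key2a A hnn hdiag hent w' (3 + t) hw' hposw hT2
    linarith
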